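/- If A is the unique maximum determinant positive definite completion of a partial symmetric Toeplitz matrix with prescribed diagonal a, prescribed super/subdiagonal b, and prescribed corner entries c (positions (1,n) and (n,1)), then A is persymmetric: A = J A J, where J is the reversal (anti-identity) matrix. -/

import Mathlib

open Matrix

lemma posDef_conj13 {m : Type*} [Fintype m] [DecidableEq m]
    {A B : Matrix m m ℝ} (hA : A.PosDef) (hB : IsUnit B.det) :
    (Bᴴ * A * B).PosDef := by
  refine Matrix.PosDef.of_dotProduct_mulVec_pos (Matrix.isHermitian_conjTranspose_mul_mul B hA.1) (fun x hx => ?_)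
  have hBx : B *ᵥ x ≠ 0 := by
    intro h
    apply hx
    have h2 := congrArg (fun v => B⁻¹ *ᵥ v) h
    simpa [Matrix.mulVec_mulVec, Matrix.nonsing_inv_mul B hB] using h2
  simpa only [star_mulVec, dotProduct_mulVec, vecMul_vecMul] using hA.dotProduct_mulVec_pos hBx

lemma unique_maxdet13 {m : Type*} [Fintype m] [DecidableEq m]
    {A B : Matrix m m ℝ} (hA : A.PosDef) (hB : B.PosDef)
    (hdet : B.det = A.det)
    (hle : ((2:ℝ)⁻¹ • (A + B)).det ≤ A.det) : B = A := by
  have hAdet : 0 < A.det := hA.det_pos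
  obtain ⟨R, hRps, hRR⟩ : ∃ R : Matrix m m ℝ, R.PosSemidef ∧ R * R = A :=
    open scoped MatrixOrder in ⟨CFC.sqrt A, (CFC.sqrt_nonneg A).posSemidef, CFC.sqrt_mul_sqrt_self A hA.posSemidef.nonneg⟩
  have hdetR : R.det * R.det = A.det := by rw [← det_mul, hRR]
  have hRu : IsUnit R.det := by
    rw [isUnit_iff_ne_zero]
    intro h
    rw [h, mul_zero] at hdetR
    exact hAdet.ne' hdetR.symm
  have hRH : Rᴴ = R := hRps.isHermitian
  have hRiH : (R⁻¹)ᴴ = R⁻¹ := by rw [conjTranspose_nonsing_inv, hRH]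
  have hRiu : IsUnit (R⁻¹).det := Matrix.isUnit_nonsing_inv_det R hRu
  obtain ⟨S, hSdef⟩ : ∃ S, S = R⁻¹ * B * R⁻¹ := ⟨_, rfl⟩
  have hSpd : S.PosDef := by
    have := posDef_conj13 hB hRiu
    rwa [hRiH, ← hSdef] at this
  have hRSR : R * S * R = B := by
    rw [hSdef]
    have h3 : R * (R⁻¹ * B * R⁻¹) * R = (R * R⁻¹) * B * (R⁻¹ * R) := by
      simp only [Matrix.mul_assoc]
    rw [h3, Matrix.mul_nonsing_inv _ hRu, Matrix.nonsing_inv_mul _ hRu,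
      Matrix.one_mul, Matrix.mul_one]
  have hSdet : S.det = 1 := by
    have h1 : B.det = R.det * S.det * R.det := by rw [← hRSR, det_mul, det_mul]
    have h2 : A.det * S.det = A.det * 1 := by
      linear_combination (-S.det) * hdetR - h1 + hdet
    exact mul_left_cancel₀ hAdet.ne' h2
  have hSh : S.IsHermitian := hSpd.isHermitian
  set lam := hSh.eigenvalues with hlam
  set U : Matrix m m ℝ := (hSh.eigenvectorUnitary : Matrix m m ℝ) with hU
  have hspec : S = U * diagonal (RCLike.ofReal ∘ lam) * star U := hSh.spectral_theorem
  have hUU : U * star U = 1 := (Matrix.mem_unitaryGroup_iff).mp hSh.eigenvectorUnitary.2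
  have hdiag : diagonal ((RCLike.ofReal : ℝ → ℝ) ∘ lam) = diagonal lam := by congr 1
  rw [hdiag] at hspec
  have hlampos : ∀ i, 0 < lam i := fun i => hSpd.eigenvalues_pos i
  have hprodlam : ∏ i, lam i = 1 := by
    have := hSh.det_eq_prod_eigenvalues
    rw [hSdet] at this
    exact_mod_cast this.symm
  have hmid : (2:ℝ)⁻¹ • (A + B) = R * ((2:ℝ)⁻¹ • (1 + S)) * R := by
    rw [Matrix.mul_smul, Matrix.smul_mul, Matrix.mul_add, Matrix.add_mul, Matrix.mul_one, hRR, hRSR]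
  have hmid3 : (2:ℝ)⁻¹ • (1 + (diagonal lam : Matrix m m ℝ)) =
      diagonal (fun i => (2:ℝ)⁻¹ * (1 + lam i)) := by
    ext i k
    rcases eq_or_ne i k with h | h
    · subst h; simp
    · simp [h, Matrix.one_apply_ne h]
  have hmid2 : (2:ℝ)⁻¹ • (1 + S) = U * diagonal (fun i => (2:ℝ)⁻¹ * (1 + lam i)) * star U := by
    have h5 : (2:ℝ)⁻¹ • (1 + S) = U * ((2:ℝ)⁻¹ • (1 + diagonal lam)) * star U := by
      rw [Matrix.mul_smul, Matrix.smul_mul, Matrix.mul_add, Matrix.add_mul, Matrix.mul_one, hUU,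
        ← hspec]
    rw [h5, hmid3]
  have hdetmid : ((2:ℝ)⁻¹ • (1 + S)).det = ∏ i, (2:ℝ)⁻¹ * (1 + lam i) := by
    rw [hmid2, det_mul, det_mul, det_diagonal]
    have h4 : U.det * (star U).det = 1 := by rw [← det_mul, hUU, det_one]
    linear_combination (∏ i, (2:ℝ)⁻¹ * (1 + lam i)) * h4
  set P := ∏ i, (2:ℝ)⁻¹ * (1 + lam i) with hP
  have hPle : P ≤ 1 := by
    have h1 : ((2:ℝ)⁻¹ • (A + B)).det = A.det * P := by
      rw [hmid, det_mul, det_mul, hdetmid, ← hdetR]; ring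
    rw [h1] at hle
    nlinarith
  have hPpos : 0 < P := by
    apply Finset.prod_pos
    intro i _
    have := hlampos i
    nlinarith
  have hall : ∀ i, lam i = 1 := by
    by_contra hc
    push_neg at hc
    obtain ⟨j, hj⟩ := hc
    have hlt : ∏ i, lam i < ∏ i, ((2:ℝ)⁻¹ * (1 + lam i))^2 := by
      apply Finset.prod_lt_prod
      · intro i _; exact hlampos i
      · intro i _
        nlinarith [hlampos i, sq_nonneg (lam i - 1)]
      · refine ⟨j, Finset.mem_univ j, ?_⟩
        have := hlampos j
        have h2 : (0:ℝ) < (lam j - 1)^2 := sq_pos_iff.mpr (sub_ne_zero.mpr hj)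
        nlinarith
    rw [hprodlam, Finset.prod_pow, ← hP] at hlt
    nlinarith
  have hS1 : S = 1 := by
    have hl1 : lam = fun _ => 1 := funext hall
    rw [hspec, hl1, diagonal_one, Matrix.mul_one, hUU]
  rw [← hRSR, hS1, Matrix.mul_one, hRR]

theorem stmt13 {n : ℕ} (hn : 4 ≤ n) (a b c : ℝ)
    (Completion : Matrix (Fin n) (Fin n) ℝ → Prop)
    (hCompletion : ∀ M, Completion M ↔ (M.IsSymm ∧ (∀ i, M i i = a) ∧
      (∀ i j : Fin n, (i : ℕ) + 1 = (j : ℕ) → M i j = b) ∧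
      M ⟨0, by omega⟩ ⟨n - 1, by omega⟩ = c))
    (A : Matrix (Fin n) (Fin n) ℝ) (hA : Completion A) (hApd : A.PosDef)
    (hAmax : ∀ M, Completion M → M.PosDef → M.det ≤ A.det)
    (J : Matrix (Fin n) (Fin n) ℝ)
    (hJ : ∀ i j : Fin n, J i j = if (i : ℕ) + (j : ℕ) = n - 1 then 1 else 0) :
    A = J * A * J := by
  obtain ⟨hsym, hdiag, hsup, hcorner⟩ := (hCompletion A).mp hA
  have hsym' : ∀ i j, A j i = A i j := fun i j => congrFun (congrFun hsym i) j
  have hrev1 : ∀ (x y : Fin n), ((x : ℕ) + (y : ℕ) = n - 1) ↔ y = Fin.rev x := by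
    intro x y
    rw [Fin.ext_iff, Fin.val_rev]
    have := x.isLt; have := y.isLt
    omega
  have hrev2 : ∀ (x y : Fin n), ((x : ℕ) + (y : ℕ) = n - 1) ↔ x = Fin.rev y := by
    intro x y
    rw [Fin.ext_iff, Fin.val_rev]
    have := x.isLt; have := y.isLt
    omega
  -- entries of J * M and M * J
  have hJrow : ∀ (M : Matrix (Fin n) (Fin n) ℝ) (i j : Fin n),
      (J * M) i j = M (Fin.rev i) j := by
    intro M i j
    rw [mul_apply]
    have : ∀ k : Fin n, J i k * M k j = if k = Fin.rev i then M k j else 0 := by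
      intro k
      rw [hJ]
      by_cases h : (i : ℕ) + (k : ℕ) = n - 1
      · rw [if_pos h, if_pos ((hrev1 i k).mp h), one_mul]
      · rw [if_neg h, if_neg (fun hk => h ((hrev1 i k).mpr hk)), zero_mul]
    simp_rw [this]
    rw [Finset.sum_ite_eq' Finset.univ (Fin.rev i) (fun k => M k j)]
    simp
  have hJcol : ∀ (M : Matrix (Fin n) (Fin n) ℝ) (i j : Fin n),
      (M * J) i j = M i (Fin.rev j) := by
    intro M i j
    rw [mul_apply]
    have : ∀ k : Fin n, M i k * J k j = if k = Fin.rev j then M i k else 0 := by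
      intro k
      rw [hJ]
      by_cases h : (k : ℕ) + (j : ℕ) = n - 1
      · rw [if_pos h, if_pos ((hrev2 k j).mp h), mul_one]
      · rw [if_neg h, if_neg (fun hk => h ((hrev2 k j).mpr hk)), mul_zero]
    simp_rw [this]
    rw [Finset.sum_ite_eq' Finset.univ (Fin.rev j) (fun k => M i k)]
    simp
  set B := J * A * J with hBdef
  have hBent : ∀ i j, B i j = A (Fin.rev i) (Fin.rev j) := by
    intro i j
    rw [hBdef, hJcol (J * A) i j, hJrow A i (Fin.rev j)]
  -- J * J = 1 and J symmetric
  have hJJ : J * J = 1 := by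
    ext i j
    rw [hJrow J i j, hJ, one_apply]
    have hc : ((Fin.rev i : ℕ) + (j : ℕ) = n - 1) ↔ i = j := by
      rw [Fin.val_rev, Fin.ext_iff]
      have := i.isLt; have := j.isLt
      omega
    by_cases h : i = j
    · rw [if_pos (hc.mpr h), if_pos h]
    · rw [if_neg (fun hh => h (hc.mp hh)), if_neg h]
  have hJdet : IsUnit J.det := by
    apply IsUnit.of_mul_eq_one J.det
    rw [← det_mul, hJJ, det_one]
  have hJsymm : Jᴴ = J := by
    ext i j
    simp only [conjTranspose_apply, star_trivial]
    rw [hJ, hJ]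
    congr 1
    simp [add_comm]
  -- B is a positive definite completion with the same determinant
  have hBpd : B.PosDef := by
    have h := posDef_conj13 hApd hJdet
    rw [hJsymm] at h
    rwa [← hBdef] at h
  have hBdet : B.det = A.det := by
    have hJJdet : J.det * J.det = 1 := by rw [← det_mul, hJJ, det_one]
    rw [hBdef, det_mul, det_mul]
    linear_combination A.det * hJJdet
  have hBsym' : ∀ i j, B j i = B i j := by
    intro i j
    rw [hBent, hBent, hsym']
  have hBsym : B.IsSymm := by
    ext i j
    rw [transpose_apply]
    exact hBsym' i j
  have hBcomp : Completion B := by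
    rw [hCompletion]
    refine ⟨hBsym, fun i => by rw [hBent]; exact hdiag _, fun i j hij => ?_, ?_⟩
    · rw [hBent, hsym']
      apply hsup
      rw [Fin.val_rev, Fin.val_rev]
      have := i.isLt; have := j.isLt
      omega
    · rw [hBent]
      have h0 : Fin.rev (⟨0, by omega⟩ : Fin n) = ⟨n - 1, by omega⟩ := by
        apply Fin.ext
        rw [Fin.val_rev]
      have h1 : Fin.rev (⟨n - 1, by omega⟩ : Fin n) = ⟨0, by omega⟩ := by
        apply Fin.ext
        rw [Fin.val_rev]
        show n - (n - 1 + 1) = 0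
        omega
      rw [h0, h1, hsym']
      exact hcorner
  -- the midpoint is also a positive definite completion
  set M := (2:ℝ)⁻¹ • (A + B) with hMdef
  have hMent : ∀ i j, M i j = (2:ℝ)⁻¹ * (A i j + B i j) := by
    intro i j
    rw [hMdef]
    simp
  have hMent : ∀ i j, M i j = (2:ℝ)⁻¹ * (A i j + B i j) := by
    intro i j
    rw [hMdef]
    simp
  have hMsym' : ∀ i j, M j i = M i j := by
    intro i j
    rw [hMent, hMent, hsym' i j, hBsym' i j]
  have hMpd : M.PosDef := by
    have hAB : (A + B).PosDef := hApd.add hBpd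
    refine Matrix.PosDef.of_dotProduct_mulVec_pos ?_ (fun x hx => ?_)
    · ext i j
      simp only [conjTranspose_apply, star_trivial]
      exact hMsym' i j
    · rw [hMdef, smul_mulVec, dotProduct_smul]
      have := hAB.dotProduct_mulVec_pos hx
      simp only [smul_eq_mul]
      nlinarith
  have hMcomp : Completion M := by
    rw [hCompletion]
    refine ⟨?_, fun i => ?_, fun i j hij => ?_, ?_⟩
    · ext i j
      rw [transpose_apply]
      exact hMsym' i j
    · rw [hMent, hdiag, (hCompletion B).mp hBcomp |>.2.1 i]; ring
    · rw [hMent, hsup i j hij, ((hCompletion B).mp hBcomp).2.2.1 i j hij]; ring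
    · rw [hMent, hcorner, ((hCompletion B).mp hBcomp).2.2.2]; ring
  have hMle : M.det ≤ A.det := hAmax M hMcomp hMpd
  have hfin := unique_maxdet13 hApd hBpd hBdet (by rw [← hMdef]; exact hMle)
  exact hfin.symm
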